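/- If a class of total recursive functions is computable in the limit by a property P (i.e., for each x, if P(x) = y then φ_y is total), then there is an l-total property P', computable in the limit, giving a canonical enumeration: for any x and y, if P'(x) = i and P'(y) = j with x ≠ y, then φ_i(z) ≠ φ_j(z) for some z, and P' lists an index of each function in the class exactly once. -/

import Mathlib

open Nat.Partrec (Code)

/-- `φ i` is the partial recursive function with index `i`. -/
def φ (i : ℕ) : ℕ →. ℕ := (Denumerable.ofNat Code i).eval

/-- `LConv ψ x v`: the guessing function `ψ` on input `x` l-converges in the limit to `v`:
there is a `u` with `ψ x u = v` and for all `t > u`, `ψ x t = v` whenever it converges. -/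
def LConv (ψ : ℕ → ℕ →. ℕ) (x v : ℕ) : Prop :=
  ∃ u, v ∈ ψ x u ∧ ∀ t, u < t → ∀ w ∈ ψ x t, w = v

namespace Stmt10
open Nat.Partrec.Code

instance decBexLt (P : ℕ → Prop) [DecidablePred P] (t : ℕ) : Decidable (∃ u, u < t ∧ P u) :=
  decidable_of_iff (¬ ∀ u, u < t → ¬ P u) (by push_neg; simp only [exists_prop])

/-- coded `evaln`: `0` = divergent, `v+1` = converges with value `v`. -/
def EE (c : Code) (s z : ℕ) : ℕ := Encodable.encode (evaln s c z)

theorem EE_eq_zero_iff {c : Code} {s z : ℕ} : EE c s z = 0 ↔ evaln s c z = none := by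
  cases h : evaln s c z <;> simp [EE, h, Encodable.encode_none, Encodable.encode_some]

theorem EE_pos_iff {c : Code} {s z : ℕ} : 0 < EE c s z ↔ ∃ v, evaln s c z = some v := by
  cases h : evaln s c z <;> simp [EE, h, Encodable.encode_none, Encodable.encode_some]

theorem EE_eq_succ_iff {c : Code} {s z v : ℕ} : EE c s z = v + 1 ↔ evaln s c z = some v := by
  cases h : evaln s c z <;>
    simp [EE, h, Encodable.encode_none, Encodable.encode_some, Encodable.encode_nat]

def bestu (c : Code) (s x : ℕ) : ℕ := Nat.findGreatest (fun u => 0 < EE c s (Nat.pair x u)) s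

def vv (c : Code) (s x : ℕ) : ℕ := EE c s (Nat.pair x (bestu c s x))

def newdisc (c : Code) (t x : ℕ) : Prop :=
  ∃ u, u < t ∧ 0 < EE c t (Nat.pair x u) ∧ EE c (t - 1) (Nat.pair x u) = 0 ∧
    EE c t (Nat.pair x u) ≠ vv c t x

instance (c : Code) (t x : ℕ) : Decidable (newdisc c t x) := by unfold newdisc; infer_instance

def conflict (c : Code) (t x : ℕ) : Prop := vv c t x ≠ vv c (t - 1) x ∨ newdisc c t x

instance (c : Code) (t x : ℕ) : Decidable (conflict c t x) := by unfold conflict; infer_instance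

def sett (c : Code) (s x : ℕ) : ℕ := Nat.findGreatest (fun t => conflict c t x) s

/-- coded evaln for φ-indices -/
def Ei (s a z : ℕ) : ℕ := EE (Denumerable.ofNat Code a) s z

/-- no difference between `φ a` and `φ b` found by stage `s` -/
def noDiff (s a b : ℕ) : Prop :=
  ¬ ∃ z, z < s ∧ 0 < Ei s a z ∧ 0 < Ei s b z ∧ Ei s a z ≠ Ei s b z

instance (s a b : ℕ) : Decidable (noDiff s a b) := by unfold noDiff; infer_instance

def blocked (c : Code) (s x : ℕ) : Prop :=
  ∃ x', x' < s ∧ 0 < vv c s x' ∧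
    (sett c s x' < sett c s x ∨ (sett c s x' = sett c s x ∧ x' < x)) ∧
    noDiff s (vv c s x' - 1) (vv c s x - 1)

instance (c : Code) (s x : ℕ) : Decidable (blocked c s x) := by unfold blocked; infer_instance

def jk (cg : Code) (n : ℕ) : ℕ := Encodable.encode (cg.curry n)

def FF (c cg : Code) (n s : ℕ) : ℕ :=
  if 0 < vv c s n.unpair.1 ∧ sett c s n.unpair.1 = n.unpair.2 ∧ ¬ blocked c s n.unpair.1
  then vv c s n.unpair.1 - 1 else jk cg n


section Computability
open Primrec

variable {α : Type*} [Primcodable α]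


theorem bex_prim {f : α → ℕ} {p : α → ℕ → Prop} [∀ a n, Decidable (p a n)]
    (hf : Primrec f) (hp : PrimrecRel p) : PrimrecPred fun a => ∃ t, t < f a ∧ p a t := by
  have hq : PrimrecRel fun a t => t < f a ∧ p a t :=
    PrimrecPred.and (Primrec.nat_lt.comp Primrec.snd (hf.comp Primrec.fst)) hp
  have hfg : Primrec fun a => Nat.findGreatest (fun t => t < f a ∧ p a t) (f a) :=
    Primrec.nat_findGreatest hf hq
  have h2 : PrimrecPred fun a =>
      (Nat.findGreatest (fun t => t < f a ∧ p a t) (f a) < f a ∧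
        p a (Nat.findGreatest (fun t => t < f a ∧ p a t) (f a))) :=
    hq.comp Primrec.id hfg
  refine h2.of_eq fun a => ⟨fun h => ⟨_, h.1, h.2⟩, fun h' => ?_⟩
  obtain ⟨t, hlt, hpt⟩ := h'
  exact Nat.findGreatest_spec (P := fun t => t < f a ∧ p a t) (le_of_lt hlt) ⟨hlt, hpt⟩


theorem FF_computable (c cg : Code) : Computable₂ (FF c cg) := by
  -- EE c as a Primrec₂ function of (s, z)
  have hEE : Primrec₂ (EE c) :=
    Primrec.encode.comp
      (primrec_evaln.comp ((Primrec.fst.pair (Primrec.const c)).pair Primrec.snd))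
  -- bestu c as Primrec₂ of (s, x)
  have hbu : Primrec₂ (bestu c) := by
    have hp : PrimrecRel fun (q : ℕ × ℕ) u => 0 < EE c q.1 (Nat.pair q.2 u) :=
      Primrec.nat_lt.comp (Primrec.const 0)
        (hEE.comp (Primrec.fst.comp Primrec.fst)
          (Primrec₂.natPair.comp (Primrec.snd.comp Primrec.fst) Primrec.snd))
    exact (Primrec.nat_findGreatest (Primrec.fst) hp).to₂
  have hvv : Primrec₂ (vv c) :=
    (hEE.comp Primrec.fst
      (Primrec₂.natPair.comp Primrec.snd (hbu.comp Primrec.fst Primrec.snd))).to₂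
  -- conflict as a PrimrecPred on pairs (t, x)
  have hconf : PrimrecPred fun q : ℕ × ℕ => conflict c q.1 q.2 := by
    have h1 : PrimrecPred fun q : ℕ × ℕ => vv c q.1 q.2 ≠ vv c (q.1 - 1) q.2 :=
      PrimrecPred.not (Primrec.eq.comp (hvv.comp Primrec.fst Primrec.snd)
        (hvv.comp (Primrec.nat_sub.comp Primrec.fst (Primrec.const 1)) Primrec.snd))
    have h2 : PrimrecPred fun q : ℕ × ℕ => newdisc c q.1 q.2 := by
      have hinner : PrimrecRel fun (q : ℕ × ℕ) u =>
          0 < EE c q.1 (Nat.pair q.2 u) ∧ EE c (q.1 - 1) (Nat.pair q.2 u) = 0 ∧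
            EE c q.1 (Nat.pair q.2 u) ≠ vv c q.1 q.2 := by
        have e1 : Primrec fun (r : (ℕ × ℕ) × ℕ) => EE c r.1.1 (Nat.pair r.1.2 r.2) :=
          hEE.comp (Primrec.fst.comp Primrec.fst)
            (Primrec₂.natPair.comp (Primrec.snd.comp Primrec.fst) Primrec.snd)
        have e2 : Primrec fun (r : (ℕ × ℕ) × ℕ) => EE c (r.1.1 - 1) (Nat.pair r.1.2 r.2) :=
          hEE.comp (Primrec.nat_sub.comp (Primrec.fst.comp Primrec.fst) (Primrec.const 1))
            (Primrec₂.natPair.comp (Primrec.snd.comp Primrec.fst) Primrec.snd)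
        have e3 : Primrec fun (r : (ℕ × ℕ) × ℕ) => vv c r.1.1 r.1.2 :=
          hvv.comp (Primrec.fst.comp Primrec.fst) (Primrec.snd.comp Primrec.fst)
        exact PrimrecPred.and (Primrec.nat_lt.comp (Primrec.const 0) e1)
          (PrimrecPred.and (Primrec.eq.comp e2 (Primrec.const 0))
            (PrimrecPred.not (Primrec.eq.comp e1 e3)))
      exact (bex_prim Primrec.fst hinner).of_eq fun q => Iff.rfl
    exact (PrimrecPred.or h1 h2).of_eq fun q => Iff.rfl
  have hsett : Primrec₂ (sett c) := by
    have hp : PrimrecRel fun (q : ℕ × ℕ) t => conflict c t q.2 :=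
      hconf.comp (Primrec.snd.pair (Primrec.snd.comp Primrec.fst))
    exact (Primrec.nat_findGreatest Primrec.fst hp).to₂
  -- noDiff as PrimrecPred on (s, a, b)
  have hEi : Primrec fun r : ℕ × ℕ × ℕ => Ei r.1 r.2.1 r.2.2 :=
    Primrec.encode.comp (primrec_evaln.comp
      ((Primrec.fst.pair ((Primrec.ofNat Code).comp (Primrec.fst.comp Primrec.snd))).pair
        (Primrec.snd.comp Primrec.snd)))
  have hnd : PrimrecPred fun r : ℕ × ℕ × ℕ => noDiff r.1 r.2.1 r.2.2 := by
    have hinner : PrimrecRel fun (r : ℕ × ℕ × ℕ) z =>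
        0 < Ei r.1 r.2.1 z ∧ 0 < Ei r.1 r.2.2 z ∧ Ei r.1 r.2.1 z ≠ Ei r.1 r.2.2 z := by
      have g1 : Primrec fun (w : (ℕ × ℕ × ℕ) × ℕ) => Ei w.1.1 w.1.2.1 w.2 :=
        hEi.comp ((Primrec.fst.comp Primrec.fst).pair
          (((Primrec.fst.comp (Primrec.snd.comp Primrec.fst))).pair Primrec.snd))
      have g2 : Primrec fun (w : (ℕ × ℕ × ℕ) × ℕ) => Ei w.1.1 w.1.2.2 w.2 :=
        hEi.comp ((Primrec.fst.comp Primrec.fst).pair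
          (((Primrec.snd.comp (Primrec.snd.comp Primrec.fst))).pair Primrec.snd))
      exact PrimrecPred.and (Primrec.nat_lt.comp (Primrec.const 0) g1)
        (PrimrecPred.and (Primrec.nat_lt.comp (Primrec.const 0) g2)
          (PrimrecPred.not (Primrec.eq.comp g1 g2)))
    exact PrimrecPred.not
      ((bex_prim Primrec.fst hinner).of_eq fun r => Iff.rfl)
  -- blocked as PrimrecPred on (s, x)
  have hbl : PrimrecPred fun q : ℕ × ℕ => blocked c q.1 q.2 := by
    have hinner : PrimrecRel fun (q : ℕ × ℕ) x' =>
        0 < vv c q.1 x' ∧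
          (sett c q.1 x' < sett c q.1 q.2 ∨ (sett c q.1 x' = sett c q.1 q.2 ∧ x' < q.2)) ∧
          noDiff q.1 (vv c q.1 x' - 1) (vv c q.1 q.2 - 1) := by
      have v1 : Primrec fun (w : (ℕ × ℕ) × ℕ) => vv c w.1.1 w.2 :=
        hvv.comp (Primrec.fst.comp Primrec.fst) Primrec.snd
      have v2 : Primrec fun (w : (ℕ × ℕ) × ℕ) => vv c w.1.1 w.1.2 :=
        hvv.comp (Primrec.fst.comp Primrec.fst) (Primrec.snd.comp Primrec.fst)
      have s1 : Primrec fun (w : (ℕ × ℕ) × ℕ) => sett c w.1.1 w.2 :=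
        hsett.comp (Primrec.fst.comp Primrec.fst) Primrec.snd
      have s2 : Primrec fun (w : (ℕ × ℕ) × ℕ) => sett c w.1.1 w.1.2 :=
        hsett.comp (Primrec.fst.comp Primrec.fst) (Primrec.snd.comp Primrec.fst)
      refine PrimrecPred.and (Primrec.nat_lt.comp (Primrec.const 0) v1)
        (PrimrecPred.and
          (PrimrecPred.or (Primrec.nat_lt.comp s1 s2)
            (PrimrecPred.and (Primrec.eq.comp s1 s2)
              (Primrec.nat_lt.comp Primrec.snd (Primrec.snd.comp Primrec.fst))))
          (hnd.comp ((Primrec.fst.comp Primrec.fst).pair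
            ((Primrec.nat_sub.comp v1 (Primrec.const 1)).pair
              (Primrec.nat_sub.comp v2 (Primrec.const 1))))))
    exact (bex_prim Primrec.fst hinner).of_eq fun q => Iff.rfl
  -- assemble FF
  have hx : Primrec fun p : ℕ × ℕ => p.1.unpair.1 :=
    Primrec.fst.comp (Primrec.unpair.comp Primrec.fst)
  have hσ : Primrec fun p : ℕ × ℕ => p.1.unpair.2 :=
    Primrec.snd.comp (Primrec.unpair.comp Primrec.fst)
  have hvvp : Primrec fun p : ℕ × ℕ => vv c p.2 p.1.unpair.1 := hvv.comp Primrec.snd hx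
  have hcond : PrimrecPred fun p : ℕ × ℕ =>
      0 < vv c p.2 p.1.unpair.1 ∧ sett c p.2 p.1.unpair.1 = p.1.unpair.2 ∧
        ¬ blocked c p.2 p.1.unpair.1 :=
    PrimrecPred.and (Primrec.nat_lt.comp (Primrec.const 0) hvvp)
      (PrimrecPred.and (Primrec.eq.comp (hsett.comp Primrec.snd hx) hσ)
        (PrimrecPred.not (hbl.comp (Primrec.snd.pair hx))))
  have hjk : Primrec fun p : ℕ × ℕ => jk cg p.1 :=
    Primrec.encode.comp (primrec₂_curry.comp (Primrec.const cg) Primrec.fst)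
  have : Primrec fun p : ℕ × ℕ => FF c cg p.1 p.2 :=
    Primrec.ite hcond (Primrec.nat_sub.comp hvvp (Primrec.const 1)) hjk
  exact this.to₂.to_comp

end Computability

section Semantics

variable {c : Code} {ψ : ℕ → ℕ →. ℕ} {x y s : ℕ}

theorem vv_pos_iff {s x : ℕ} : 0 < vv c s x ↔ ∃ u v, evaln s c (Nat.pair x u) = some v := by
  constructor
  · intro h
    obtain ⟨v, hv⟩ := EE_pos_iff.1 h
    exact ⟨_, v, hv⟩
  · rintro ⟨u, v, hv⟩
    have hus : u ≤ s := le_of_lt (lt_of_le_of_lt (Nat.right_le_pair x u) (evaln_bound hv))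
    have hq : 0 < EE c s (Nat.pair x u) := EE_pos_iff.2 ⟨v, hv⟩
    exact Nat.findGreatest_spec (P := fun u => 0 < EE c s (Nat.pair x u)) hus hq

theorem bestu_max {s x u v : ℕ} (h : evaln s c (Nat.pair x u) = some v) : u ≤ bestu c s x := by
  have hus : u ≤ s := le_of_lt (lt_of_le_of_lt (Nat.right_le_pair x u) (evaln_bound h))
  exact Nat.le_findGreatest hus (EE_pos_iff.2 ⟨v, h⟩)

theorem vv_spec {s x : ℕ} (h : 0 < vv c s x) :
    evaln s c (Nat.pair x (bestu c s x)) = some (vv c s x - 1) := by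
  obtain ⟨v, hv⟩ := EE_pos_iff.1 h
  have : vv c s x = v + 1 := EE_eq_succ_iff.2 hv
  rw [this]; simpa using hv

theorem vv_pos_mono {s s' x : ℕ} (hss : s ≤ s') (h : 0 < vv c s x) : 0 < vv c s' x := by
  obtain ⟨u, v, hv⟩ := vv_pos_iff.1 h
  exact vv_pos_iff.2 ⟨u, v, evaln_mono hss hv⟩

theorem lconv_unique (h1 : LConv ψ x y) {y' : ℕ} (h2 : LConv ψ x y') : y = y' := by
  obtain ⟨u1, hm1, ha1⟩ := h1; obtain ⟨u2, hm2, ha2⟩ := h2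
  rcases lt_trichotomy u1 u2 with h | h | h
  · exact (ha1 u2 h y' hm2).symm
  · exact Part.mem_unique hm1 (h ▸ hm2)
  · exact ha2 u1 h y hm1

variable (hc : ∀ x u, ψ x u = c.eval (Nat.pair x u))
include hc

theorem C1 (hxy : LConv ψ x y) : ∃ S, ∀ s, S ≤ s → vv c s x = y + 1 := by
  obtain ⟨u0, hy, hafter⟩ := hxy
  have hy' : y ∈ c.eval (Nat.pair x u0) := by rw [← hc]; exact hy
  obtain ⟨k0, hk0⟩ := evaln_complete.1 hy'
  refine ⟨k0, fun s hs => ?_⟩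
  have hs' : evaln s c (Nat.pair x u0) = some y := evaln_mono hs hk0
  have hpos : 0 < vv c s x := vv_pos_iff.2 ⟨u0, y, hs'⟩
  have hspec := vv_spec hpos
  have hmem : (vv c s x - 1) ∈ ψ x (bestu c s x) := by
    rw [hc]; exact evaln_sound hspec
  have hub : u0 ≤ bestu c s x := bestu_max hs'
  have hvy : vv c s x - 1 = y := by
    rcases eq_or_lt_of_le hub with he | hl
    · rw [← he] at hmem; exact Part.mem_unique hmem hy
    · exact hafter _ hl _ hmem
  omega

omit hc

theorem combineB (B : ℕ) (Q : ℕ → ℕ → Prop) (h : ∀ i, i < B → ∃ S, ∀ s, S ≤ s → Q i s) :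
    ∃ S, ∀ s, S ≤ s → ∀ i, i < B → Q i s := by
  induction B with
  | zero => exact ⟨0, fun s _ i hi => absurd hi (Nat.not_lt_zero i)⟩
  | succ B ih =>
    obtain ⟨S1, h1⟩ := ih fun i hi => h i (Nat.lt_succ_of_lt hi)
    obtain ⟨S2, h2⟩ := h B (Nat.lt_succ_self B)
    refine ⟨max S1 S2, fun s hs i hi => ?_⟩
    rcases Nat.lt_succ_iff_lt_or_eq.1 hi with hi' | rfl
    · exact h1 s (le_trans (le_max_left _ _) hs) i hi'
    · exact h2 s (le_trans (le_max_right _ _) hs)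

theorem no_newdisc_bound (x u : ℕ) :
    ∃ B, ∀ t, B ≤ t → ¬(0 < EE c t (Nat.pair x u) ∧ EE c (t - 1) (Nat.pair x u) = 0) := by
  by_cases h : ∃ k v, evaln k c (Nat.pair x u) = some v
  · obtain ⟨k, v, hk⟩ := h
    refine ⟨k + 1, fun t ht hcon => ?_⟩
    have : evaln (t - 1) c (Nat.pair x u) = some v := evaln_mono (by omega) hk
    rw [EE_eq_zero_iff.1 hcon.2] at this
    cases this
  · refine ⟨0, fun t _ hcon => ?_⟩
    obtain ⟨v, hv⟩ := EE_pos_iff.1 hcon.1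
    exact h ⟨t, v, hv⟩

include hc

theorem C2 (hxy : LConv ψ x y) : ∃ S, ∀ t, S < t → ¬ conflict c t x := by
  obtain ⟨S1, hS1⟩ := C1 hc hxy
  obtain ⟨u0, hy, hafter⟩ := hxy
  obtain ⟨S2, hS2⟩ := combineB (u0 + 1)
    (fun u t => ¬(0 < EE c t (Nat.pair x u) ∧ EE c (t - 1) (Nat.pair x u) = 0))
    (fun i _ => no_newdisc_bound (c := c) x i)
  refine ⟨max (S1 + 1) S2, fun t ht hcon => ?_⟩
  have ht1 : S1 ≤ t - 1 := by omega
  have ht2 : S1 ≤ t := by omega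
  rcases hcon with hch | hnd
  · rw [hS1 t ht2, hS1 (t - 1) ht1] at hch; exact hch rfl
  · obtain ⟨u, hut, hpos, hzero, hne⟩ := hnd
    obtain ⟨v, hv⟩ := EE_pos_iff.1 hpos
    have hvmem : v ∈ ψ x u := by rw [hc]; exact evaln_sound hv
    have hEEv : EE c t (Nat.pair x u) = v + 1 := EE_eq_succ_iff.2 hv
    by_cases hu : u0 < u
    · have : v = y := hafter u hu v hvmem
      rw [hEEv, this, hS1 t ht2] at hne; exact hne rfl
    · by_cases hu' : u = u0
      · have : v = y := Part.mem_unique hvmem (hu' ▸ hy)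
        rw [hEEv, this, hS1 t ht2] at hne; exact hne rfl
      · exact hS2 t (by omega) u (by omega) ⟨hpos, hzero⟩

omit hc

theorem sett_stable {S : ℕ} (hS : ∀ t, S < t → ¬ conflict c t x) :
    ∀ s, S ≤ s → sett c s x = sett c S x := by
  intro s hs
  have h1 : sett c S x ≤ sett c s x := Nat.findGreatest_mono_right _ hs
  have h2 : sett c s x ≤ sett c S x := by
    rcases Nat.eq_zero_or_pos (sett c s x) with h0 | hpos
    · rw [h0]; exact Nat.zero_le _
    · have hconf : conflict c (sett c s x) x :=
        (Nat.findGreatest_eq_iff.1 (rfl : sett c s x = sett c s x)).2.1 (by omega)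
      have hle : sett c s x ≤ S := not_lt.1 fun hgt => hS _ hgt hconf
      exact Nat.le_findGreatest hle hconf
  omega

theorem vv_const_of_noconf {B : ℕ} (hS : ∀ t, B < t → ¬ conflict c t x) :
    ∀ s, B ≤ s → vv c s x = vv c B x := by
  intro s hs
  induction s, hs using Nat.le_induction with
  | base => rfl
  | succ s hs ih =>
    have hnc := hS (s + 1) (by omega)
    have : vv c (s + 1) x = vv c s x := by
      by_contra hne
      exact hnc (Or.inl (by simpa using hne))
    rw [this, ih]

include hc

theorem C3 {S : ℕ} (hS1 : ∀ s, S ≤ s → vv c s x = y + 1)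
    (hS2 : ∀ t, S < t → ¬ conflict c t x) : LConv ψ x y := by
  have hpos : 0 < vv c S x := by rw [hS1 S le_rfl]; omega
  have hspec := vv_spec hpos
  have hy1 : vv c S x - 1 = y := by rw [hS1 S le_rfl]; omega
  have hyb : y ∈ ψ x (bestu c S x) := by
    rw [hc]; exact hy1 ▸ evaln_sound hspec
  refine ⟨bestu c S x, hyb, fun t ht w hw => ?_⟩
  have hwc : w ∈ c.eval (Nat.pair x t) := by rw [← hc]; exact hw
  obtain ⟨k, hk⟩ := evaln_complete.1 hwc
  have hex : ∃ k, (evaln k c (Nat.pair x t)).isSome = true := ⟨k, by rw [hk]; rfl⟩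
  set d := Nat.find hex with hd_def
  have hd : (evaln d c (Nat.pair x t)).isSome := Nat.find_spec hex
  obtain ⟨w', hw'⟩ := Option.isSome_iff_exists.1 hd
  have hww' : w' = w := Part.mem_unique (evaln_sound hw') hwc
  subst hww'
  have hbd : Nat.pair x t < d := evaln_bound hw'
  have htd : t < d := lt_of_le_of_lt (Nat.right_le_pair x t) hbd
  have hdpos : 0 < d := lt_of_le_of_lt (Nat.zero_le _) hbd
  by_cases hdS : d ≤ S
  · have hS' : evaln S c (Nat.pair x t) = some w' := evaln_mono hdS hw'
    have : t ≤ bestu c S x := bestu_max hS'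
    omega
  · have hnc := hS2 d (lt_of_not_ge hdS)
    have hnnd : ¬ newdisc c d x := fun h => hnc (Or.inr h)
    have hEEd : EE c d (Nat.pair x t) = w' + 1 := EE_eq_succ_iff.2 hw'
    have hEEd1 : EE c (d - 1) (Nat.pair x t) = 0 := by
      apply EE_eq_zero_iff.2
      cases h' : evaln (d - 1) c (Nat.pair x t) with
      | none => rfl
      | some v =>
        exact absurd (by rw [h']; rfl) (Nat.find_min hex (by omega))
    have hvvd : vv c d x = y + 1 := hS1 d (le_of_lt (lt_of_not_ge hdS))
    by_contra hwy
    exact hnnd ⟨t, htd, by rw [hEEd]; omega, hEEd1, by rw [hEEd, hvvd]; omega⟩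

theorem C4 (hx : ¬ ∃ y, LConv ψ x y) :
    (∀ s, vv c s x = 0) ∨ (∀ B, ∃ t, B < t ∧ conflict c t x) := by
  by_contra h
  push_neg at h
  obtain ⟨⟨s0, hs0⟩, B, hB⟩ := h
  have hnc : ∀ t, max B s0 < t → ¬ conflict c t x := fun t ht => hB t (by omega)
  have hvc := vv_const_of_noconf (c := c) (x := x) hnc
  have hpos : 0 < vv c (max B s0) x :=
    vv_pos_mono (le_max_right _ _) (Nat.pos_of_ne_zero hs0)
  have hS1 : ∀ s, max B s0 ≤ s → vv c s x = (vv c (max B s0) x - 1) + 1 := by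
    intro s hs; rw [hvc s hs]; omega
  exact hx ⟨_, C3 hc hS1 hnc⟩

omit hc

theorem C5 (hpos : 0 < vv c s x) : x < sett c s x := by
  have hex : ∃ t, 0 < vv c t x := ⟨s, hpos⟩
  set t0 := Nat.find hex with ht0_def
  have ht0 : 0 < vv c t0 x := Nat.find_spec hex
  have ht0le : t0 ≤ s := Nat.find_min' hex hpos
  obtain ⟨u, v, hv⟩ := vv_pos_iff.1 ht0
  have hxt0 : x < t0 := lt_of_le_of_lt (Nat.left_le_pair x u) (evaln_bound hv)
  have hprev : vv c (t0 - 1) x = 0 := by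
    rcases Nat.eq_zero_or_pos (vv c (t0 - 1) x) with h | h
    · exact h
    · exact absurd h (Nat.find_min hex (by omega))
  have hconf : conflict c t0 x := Or.inl (by rw [hprev]; omega)
  exact lt_of_lt_of_le hxt0 (Nat.le_findGreatest ht0le hconf)

theorem N1 {a b : ℕ}
    (hab : ∀ z, (Denumerable.ofNat Code a).eval z = (Denumerable.ofNat Code b).eval z)
    (s : ℕ) : noDiff s a b := by
  rintro ⟨z, hz, ha, hb, hne⟩
  obtain ⟨va, hva⟩ := EE_pos_iff.1 ha
  obtain ⟨vb, hvb⟩ := EE_pos_iff.1 hb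
  have h1 : va ∈ (Denumerable.ofNat Code a).eval z := evaln_sound hva
  have h2 : vb ∈ (Denumerable.ofNat Code a).eval z := (hab z) ▸ evaln_sound hvb
  have hvab : va = vb := Part.mem_unique h1 h2
  apply hne
  rw [show Ei s a z = va + 1 from EE_eq_succ_iff.2 hva,
    show Ei s b z = vb + 1 from EE_eq_succ_iff.2 hvb, hvab]

theorem N2 {a b z0 va vb : ℕ} (hva : va ∈ (Denumerable.ofNat Code a).eval z0)
    (hvb : vb ∈ (Denumerable.ofNat Code b).eval z0) (hne : va ≠ vb) :
    ∃ S, ∀ s, S ≤ s → ¬ noDiff s a b := by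
  obtain ⟨ka, hka⟩ := evaln_complete.1 hva
  obtain ⟨kb, hkb⟩ := evaln_complete.1 hvb
  refine ⟨max (max ka kb) (z0 + 1), fun s hs hnd => ?_⟩
  have h1 : Ei s a z0 = va + 1 := EE_eq_succ_iff.2 (evaln_mono (by omega) hka)
  have h2 : Ei s b z0 = vb + 1 := EE_eq_succ_iff.2 (evaln_mono (by omega) hkb)
  exact hnd ⟨z0, by omega, by omega, by omega, by omega⟩

end Semantics

section Junk

theorem junk_exists : ∃ cg : Code,
    ∀ n z, (Denumerable.ofNat Code (jk cg n)).eval z =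
      if z = 0 then Part.some n else Part.none := by
  classical
  set G : ℕ →. ℕ :=
    fun m => (Nat.rfind fun _ => Part.some (decide (m.unpair.2 = 0))).map fun _ => m.unpair.1
    with hG_def
  have hGpart : Nat.Partrec G := by
    apply Partrec.nat_iff.1
    apply Partrec.map
    · apply Partrec.rfind
      have hb : Computable₂ fun (m : ℕ) (_ : ℕ) => (decide (m.unpair.2 = 0) : Bool) :=
        ((PrimrecPred.decide (Primrec.eq.comp (Primrec.snd.comp (Primrec.unpair.comp Primrec.fst))
          (Primrec.const 0))).to_comp).to₂
      exact Computable₂.partrec₂ hb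
    · exact (((Primrec.fst.comp (Primrec.unpair.comp Primrec.fst)).to_comp)).to₂
  obtain ⟨cg, hcg⟩ := exists_code.1 hGpart
  refine ⟨cg, fun n z => ?_⟩
  have h1 : (Denumerable.ofNat Code (jk cg n)).eval z = G (Nat.pair n z) := by
    unfold jk
    rw [Denumerable.ofNat_encode, eval_curry, hcg]
  rw [h1]
  by_cases hz : z = 0
  · subst hz
    have hmem : (0 : ℕ) ∈ Nat.rfind fun _ : ℕ => (Part.some true : Part Bool) :=
      Nat.mem_rfind.2 ⟨Part.mem_some _, fun {m} hm => absurd hm (Nat.not_lt_zero m)⟩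
    have heq : (Nat.rfind fun _ : ℕ => (Part.some true : Part Bool)) = Part.some 0 :=
      Part.eq_some_iff.2 hmem
    simp [hG_def, heq]
  · have hdom : ¬ (Nat.rfind fun _ =>
        Part.some (decide ((Nat.pair n z).unpair.2 = 0))).Dom := by
      intro h
      obtain ⟨k, hk, -⟩ := Nat.rfind_dom.1 h
      rw [Part.mem_some_iff] at hk
      simp [hz] at hk
    rw [if_neg hz]
    apply Part.eq_none_iff'.2
    simpa [hG_def] using hdom

end Junk
end Stmt10

open Stmt10 Nat.Partrec.Code

theorem stmt10 (ψ : ℕ → ℕ →. ℕ) (hψ : Partrec₂ ψ)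
    (htot : ∀ x y, LConv ψ x y → ∀ z, ((φ y) z).Dom) :
    ∃ (P' : ℕ → ℕ) (ψ' : ℕ → ℕ →. ℕ), Partrec₂ ψ' ∧
      (∀ n, LConv ψ' n (P' n)) ∧
      (∀ m n, m ≠ n → ∃ z, φ (P' m) z ≠ φ (P' n) z) ∧
      (∀ x y, LConv ψ x y → ∃ n, ∀ z, φ (P' n) z = φ y z) := by
  classical
  -- a code for the uncurried ψ
  have hψ' : Nat.Partrec fun m => ψ m.unpair.1 m.unpair.2 :=
    Partrec.nat_iff.1 (hψ.comp (Primrec.fst.comp Primrec.unpair).to_comp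
      (Primrec.snd.comp Primrec.unpair).to_comp)
  obtain ⟨c, hc0⟩ := exists_code.1 hψ'
  have hc : ∀ x u, ψ x u = c.eval (Nat.pair x u) := by
    intro x u; rw [hc0]; simp
  obtain ⟨cg, hcg⟩ := junk_exists
  -- the limit data
  set D : ℕ → Prop := fun x => ∃ y, LConv ψ x y with hD_def
  set L : ℕ → ℕ := fun x => if h : D x then h.choose else 0 with hL_def
  have hL : ∀ x, D x → LConv ψ x (L x) := by
    intro x h
    simp only [hL_def, dif_pos h]
    exact h.choose_spec
  have hsettle : ∀ x, ∃ S, D x → ∀ s, S ≤ s →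
      vv c s x = L x + 1 ∧ sett c s x = sett c S x := by
    intro x
    by_cases h : D x
    · obtain ⟨S1, h1⟩ := C1 hc (hL x h)
      obtain ⟨S2, h2⟩ := C2 hc (hL x h)
      refine ⟨max S1 S2, fun _ s hs => ⟨h1 s (by omega), ?_⟩⟩
      exact sett_stable (fun t ht => h2 t (by omega)) s hs
    · exact ⟨0, fun h' => absurd h' h⟩
  choose Sf hSf using hsettle
  set σf : ℕ → ℕ := fun x => sett c (Sf x) x with hσf_def
  have hσ : ∀ x, D x → ∀ s, Sf x ≤ s → vv c s x = L x + 1 ∧ sett c s x = σf x := hSf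
  have htotL : ∀ x, D x → ∀ z, ((φ (L x)) z).Dom := fun x h => htot x (L x) (hL x h)
  set carrier : ℕ → Prop := fun x => D x ∧ ∀ x', D x' → (∀ z, φ (L x') z = φ (L x) z) →
      (σf x < σf x' ∨ (σf x = σf x' ∧ x ≤ x')) with hcar_def
  set target : ℕ → ℕ := fun n =>
    if D n.unpair.1 ∧ σf n.unpair.1 = n.unpair.2 ∧ carrier n.unpair.1
    then L n.unpair.1 else jk cg n with htarget_def
  -- main stabilization lemma
  have main : ∀ n, ∃ N, ∀ s, N ≤ s → FF c cg n s = target n := by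
    intro n
    obtain ⟨x, σ', rfl⟩ : ∃ x σ'', n = Nat.pair x σ'' :=
      ⟨n.unpair.1, n.unpair.2, (Nat.pair_unpair n).symm⟩
    have hFF : ∀ s, FF c cg (Nat.pair x σ') s =
        if 0 < vv c s x ∧ sett c s x = σ' ∧ ¬ blocked c s x
        then vv c s x - 1 else jk cg (Nat.pair x σ') := by
      intro s; simp only [FF, Nat.unpair_pair]
    by_cases hx : D x
    · by_cases hσeq : σf x = σ'
      · by_cases hcar : carrier x
        · -- carrier case : eventually unblocked and live
          have htv : target (Nat.pair x σ') = L x := by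
            simp only [htarget_def, Nat.unpair_pair]
            rw [if_pos ⟨hx, hσeq, hcar⟩]
          have hperx : ∀ x', ∃ S, ∀ s, S ≤ s → Sf x ≤ s →
              ¬(0 < vv c s x' ∧
                (sett c s x' < sett c s x ∨ (sett c s x' = sett c s x ∧ x' < x)) ∧
                noDiff s (vv c s x' - 1) (vv c s x - 1)) := by
            intro x'
            by_cases hDx' : D x'
            · by_cases hlexlt : σf x' < σf x ∨ (σf x' = σf x ∧ x' < x)
              · -- the functions must differ somewhere
                have hne : ¬ ∀ z, φ (L x') z = φ (L x) z := by
                  intro he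
                  rcases hcar.2 x' hDx' he with h1 | ⟨h1, h2⟩ <;>
                    rcases hlexlt with h3 | ⟨h3, h4⟩ <;> omega
                push_neg at hne
                obtain ⟨z0, hz0⟩ := hne
                have hda := htotL x' hDx' z0
                have hdb := htotL x hx z0
                have hva : (φ (L x') z0).get hda ∈ φ (L x') z0 := Part.get_mem hda
                have hvb : (φ (L x) z0).get hdb ∈ φ (L x) z0 := Part.get_mem hdb
                have hvne : (φ (L x') z0).get hda ≠ (φ (L x) z0).get hdb := by
                  intro he
                  apply hz0
                  rw [← Part.some_get hda, ← Part.some_get hdb, he]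
                obtain ⟨S3, h3⟩ := N2 hva hvb hvne
                refine ⟨max S3 (max (Sf x') (Sf x)), fun s hs hsx hbad => ?_⟩
                obtain ⟨hb1, hb2, hb3⟩ := hbad
                have h1 := hσ x' hDx' s (by omega)
                have h2 := hσ x hx s (by omega)
                have e1 : vv c s x' - 1 = L x' := by rw [h1.1]; omega
                have e2 : vv c s x - 1 = L x := by rw [h2.1]; omega
                rw [e1, e2] at hb3
                exact h3 s (by omega) hb3
              · -- the lex comparison eventually fails
                refine ⟨max (Sf x') (Sf x), fun s hs hsx hbad => ?_⟩
                obtain ⟨hb1, hb2, hb3⟩ := hbad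
                rw [(hσ x' hDx' s (by omega)).2, (hσ x hx s (by omega)).2] at hb2
                exact hlexlt hb2
            · rcases C4 hc hDx' with hnever | hunb
              · refine ⟨0, fun s _ _ hbad => ?_⟩
                rw [hnever s] at hbad
                exact absurd hbad.1 (lt_irrefl 0)
              · obtain ⟨t, htgt, hconf⟩ := hunb (σf x)
                refine ⟨t, fun s hs hsx hbad => ?_⟩
                obtain ⟨hb1, hb2, hb3⟩ := hbad
                have hset : t ≤ sett c s x' := Nat.le_findGreatest hs hconf
                rw [(hσ x hx s hsx).2] at hb2
                rcases hb2 with h | ⟨h, _⟩ <;> omega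
          obtain ⟨S0, hS0⟩ := combineB (max (σf x) x + 1) _ (fun i _ => hperx i)
          refine ⟨max S0 (Sf x), fun s hs => ?_⟩
          have hvs := hσ x hx s (by omega)
          have hnb : ¬ blocked c s x := by
            rintro ⟨x', hx's, hpos', hlex, hnd⟩
            have h5 := C5 hpos'
            have hxb : x' < max (σf x) x + 1 := by
              rcases hlex with h | ⟨h, h'⟩
              · rw [hvs.2] at h; omega
              · omega
            exact hS0 s (by omega) x' hxb (by omega) ⟨hpos', hlex, hnd⟩
          rw [hFF s, if_pos ⟨by rw [hvs.1]; omega, hvs.2.trans hσeq, hnb⟩, htv, hvs.1]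
          omega
        · -- non-carrier : eventually permanently blocked
          have htv : target (Nat.pair x σ') = jk cg (Nat.pair x σ') := by
            simp only [htarget_def, Nat.unpair_pair]
            rw [if_neg (fun hcond => hcar hcond.2.2)]
          have hex0 : ∃ x0, D x0 ∧ (∀ z, φ (L x0) z = φ (L x) z) ∧
              (σf x0 < σf x ∨ (σf x0 = σf x ∧ x0 < x)) := by
            have hthis : ¬(D x ∧ ∀ x', D x' → (∀ z, φ (L x') z = φ (L x) z) →
                (σf x < σf x' ∨ (σf x = σf x' ∧ x ≤ x'))) := hcar
            push_neg at hthis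
            obtain ⟨x0, hd0, he0, hl0⟩ := hthis hx
            exact ⟨x0, hd0, he0, by omega⟩
          obtain ⟨x0, hd0, he0, hl0⟩ := hex0
          refine ⟨max (Sf x) (max (Sf x0) (x0 + 1)), fun s hs => ?_⟩
          have hv0 := hσ x0 hd0 s (by omega)
          have hvx := hσ x hx s (by omega)
          have hbl : blocked c s x := by
            refine ⟨x0, ?_, ?_, ?_, ?_⟩
            · have h5 : x0 < sett c s x0 := C5 (by rw [hv0.1]; omega)
              have h6 : sett c s x0 ≤ s := Nat.findGreatest_le s
              omega
            · rw [hv0.1]; omega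
            · rw [hv0.2, hvx.2]; exact hl0
            · have e1 : vv c s x0 - 1 = L x0 := by rw [hv0.1]; omega
              have e2 : vv c s x - 1 = L x := by rw [hvx.1]; omega
              rw [e1, e2]
              exact N1 he0 s
          rw [hFF s, if_neg (fun hcond => hcond.2.2 hbl), htv]
      · -- wrong settling stage
        have htv : target (Nat.pair x σ') = jk cg (Nat.pair x σ') := by
          simp only [htarget_def, Nat.unpair_pair]
          rw [if_neg (fun hcond => hσeq hcond.2.1)]
        refine ⟨Sf x, fun s hs => ?_⟩
        have hvs := hσ x hx s hs
        rw [hFF s, if_neg (fun hcond => hσeq (hvs.2.symm.trans hcond.2.1)), htv]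
    · -- x is not in D
      have htv : target (Nat.pair x σ') = jk cg (Nat.pair x σ') := by
        simp only [htarget_def, Nat.unpair_pair]
        rw [if_neg (fun hcond => hx hcond.1)]
      rcases C4 hc hx with hnever | hunb
      · refine ⟨0, fun s _ => ?_⟩
        rw [hFF s, htv, if_neg (fun hcond => by rw [hnever s] at hcond; exact absurd hcond.1 (lt_irrefl 0))]
      · obtain ⟨t, htgt, hconf⟩ := hunb σ'
        refine ⟨t, fun s hs => ?_⟩
        have hset : t ≤ sett c s x := Nat.le_findGreatest hs hconf
        rw [hFF s, htv, if_neg ?_]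
        intro hcond
        have := hcond.2.1
        omega

  choose Nf hNf using main
  refine ⟨target, fun n s => Part.some (FF c cg n s), ?_, ?_, ?_, ?_⟩
  · exact Computable₂.partrec₂ (FF_computable c cg)
  · intro n
    refine ⟨Nf n, ?_, fun t ht w hw => ?_⟩
    · show target n ∈ Part.some (FF c cg n (Nf n))
      rw [hNf n (Nf n) le_rfl]; exact Part.mem_some _
    · have hw' : w ∈ Part.some (FF c cg n t) := hw
      rw [hNf n t (le_of_lt ht)] at hw'
      exact Part.mem_some_iff.1 hw' 
  · -- pairwise distinct
    intro m n hmn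
    have hφjk : ∀ k z, φ (jk cg k) z = if z = 0 then Part.some k else Part.none :=
      fun k z => hcg k z
    by_cases hm : D m.unpair.1 ∧ σf m.unpair.1 = m.unpair.2 ∧ carrier m.unpair.1 <;>
      by_cases hn : D n.unpair.1 ∧ σf n.unpair.1 = n.unpair.2 ∧ carrier n.unpair.1
    · -- both carriers
      have htm : target m = L m.unpair.1 := by simp only [htarget_def, if_pos hm]
      have htn : target n = L n.unpair.1 := by simp only [htarget_def, if_pos hn]
      have hxmn : m.unpair.1 ≠ n.unpair.1 := by
        intro he
        apply hmn
        have em : m = Nat.pair m.unpair.1 m.unpair.2 := (Nat.pair_unpair m).symm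
        have en : n = Nat.pair n.unpair.1 n.unpair.2 := (Nat.pair_unpair n).symm
        rw [em, en, ← hm.2.1, ← hn.2.1, he]
      by_contra hno
      push_neg at hno
      have heq : ∀ z, φ (L m.unpair.1) z = φ (L n.unpair.1) z := by
        intro z
        have := hno z
        rwa [htm, htn] at this
      have hA := hn.2.2.2 m.unpair.1 hm.1 heq
      have hB := hm.2.2.2 n.unpair.1 hn.1 (fun z => (heq z).symm)
      rcases hA with h1 | ⟨h1, h2⟩ <;> rcases hB with h3 | ⟨h3, h4⟩ <;> omega
    · -- carrier vs junk
      have htm : target m = L m.unpair.1 := by simp only [htarget_def, if_pos hm]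
      have htn : target n = jk cg n := by simp only [htarget_def, if_neg hn]
      refine ⟨1, fun he => ?_⟩
      rw [htm, htn] at he
      have hd := htotL m.unpair.1 hm.1 1
      rw [he, hφjk n 1, if_neg one_ne_zero] at hd
      exact hd
    · -- junk vs carrier
      have htm : target m = jk cg m := by simp only [htarget_def, if_neg hm]
      have htn : target n = L n.unpair.1 := by simp only [htarget_def, if_pos hn]
      refine ⟨1, fun he => ?_⟩
      rw [htm, htn] at he
      have hd := htotL n.unpair.1 hn.1 1
      rw [← he, hφjk m 1, if_neg one_ne_zero] at hd
      exact hd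
    · -- both junk
      have htm : target m = jk cg m := by simp only [htarget_def, if_neg hm]
      have htn : target n = jk cg n := by simp only [htarget_def, if_neg hn]
      refine ⟨0, fun he => ?_⟩
      rw [htm, htn, hφjk m 0, hφjk n 0, if_pos rfl, if_pos rfl] at he
      exact hmn (Part.mem_some_iff.1 (he ▸ Part.mem_some m))
  · -- coverage
    intro xs y hxy
    have hDx : D xs := ⟨y, hxy⟩
    have hyL : L xs = y := lconv_unique (hL xs hDx) hxy
    set T : ℕ → Prop := fun x => D x ∧ ∀ z, φ (L x) z = φ (L xs) z with hT_def
    have hTx : T xs := ⟨hDx, fun z => rfl⟩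
    have hAne : ∃ m, ∃ x, T x ∧ σf x = m := ⟨σf xs, xs, hTx, rfl⟩
    set σ0 : ℕ := sInf {m | ∃ x, T x ∧ σf x = m} with hσ0_def
    have hσ0 : ∃ x, T x ∧ σf x = σ0 := Nat.sInf_mem hAne
    set x0 : ℕ := sInf {x | T x ∧ σf x = σ0} with hx0_def
    have hx0 : T x0 ∧ σf x0 = σ0 := Nat.sInf_mem hσ0
    have hcarx0 : carrier x0 := by
      refine ⟨hx0.1.1, fun x' hDx' heq' => ?_⟩
      have hTx' : T x' := ⟨hDx', fun z => (heq' z).trans (hx0.1.2 z)⟩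
      have hσle : σ0 ≤ σf x' := Nat.sInf_le ⟨x', hTx', rfl⟩
      rcases lt_or_eq_of_le hσle with hlt | heqσ
      · left; rw [hx0.2]; exact hlt
      · right
        refine ⟨by rw [hx0.2, heqσ], Nat.sInf_le ⟨hTx', heqσ.symm⟩⟩
    refine ⟨Nat.pair x0 (σf x0), fun z => ?_⟩
    have hcond : D (Nat.pair x0 (σf x0)).unpair.1 ∧
        σf (Nat.pair x0 (σf x0)).unpair.1 = (Nat.pair x0 (σf x0)).unpair.2 ∧
        carrier (Nat.pair x0 (σf x0)).unpair.1 := by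
      rw [Nat.unpair_pair]
      exact ⟨hx0.1.1, rfl, hcarx0⟩
    have htv : target (Nat.pair x0 (σf x0)) = L x0 := by
      simp only [htarget_def, if_pos hcond, Nat.unpair_pair]
    rw [htv, hx0.1.2 z, hyL]
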